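/- Let X be a compactum. A functional I : C(X) → ℝ satisfies (1) I(1_X) = 1; (2) I(ψ ∨ φ) = max(I(ψ), I(φ)) for all comonotone φ, ψ ∈ C(X); (3) I(λ_X + φ) = λ + I(φ) for all λ ∈ ℝ and φ ∈ C(X), if and only if there exists a capacity c on X such that I(φ) = ∫^{∨+}_X φ dc for every φ ∈ C(X), where ∫^{∨+}_X φ dc = max{ln(c(φ_t)) + t : t ∈ ℝ}. -/

import Mathlib

set_option linter.unusedSectionVars false
/-- An (upper-semicontinuous) capacity on a compactum `X`: a `[0,1]`-valued,
monotone, normalized set function on closed sets, upper semicontinuous in the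
sense that if `ν(F) < a` then there is an open `O ⊇ F` with `ν(B) < a` for every
closed `B ⊆ O`. -/
def IsCapacity {X : Type*} [TopologicalSpace X] (ν : Set X → ℝ) : Prop :=
  ν Set.univ = 1 ∧ ν ∅ = 0 ∧
  (∀ F : Set X, IsClosed F → 0 ≤ ν F ∧ ν F ≤ 1) ∧
  (∀ F G : Set X, IsClosed F → IsClosed G → F ⊆ G → ν F ≤ ν G) ∧
  (∀ (F : Set X) (a : ℝ), IsClosed F → ν F < a →
    ∃ O : Set X, IsOpen O ∧ F ⊆ O ∧ ∀ B : Set X, IsClosed B → B ⊆ O → ν B < a)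

/-- A possibility capacity: a capacity with `ν(A ∪ B) = max(ν(A), ν(B))`
for all closed `A`, `B`. -/
def IsPossibilityCapacity {X : Type*} [TopologicalSpace X] (ν : Set X → ℝ) : Prop :=
  IsCapacity ν ∧
  ∀ A B : Set X, IsClosed A → IsClosed B → ν (A ∪ B) = max (ν A) (ν B)
open Classical in
/-- The exponential `[-∞,0] → [0,1]`, with `exp(-∞) = 0`. -/
noncomputable def myExp (a : EReal) : ℝ :=
  if a = ⊥ then 0 else Real.exp a.toReal

open Classical in
/-- The logarithm `[0,1] → [-∞,0]`, with `ln(0) = -∞`. -/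
noncomputable def myLog (r : ℝ) : EReal :=
  if r ≤ 0 then ⊥ else (Real.log r : EReal)

/-- Two continuous functions are comonotone (equiordered) if
`(φ(x₁) - φ(x₂)) · (ψ(x₁) - ψ(x₂)) ≥ 0` for all `x₁, x₂`. -/
def Comonotone {X : Type*} [TopologicalSpace X] (φ ψ : C(X, ℝ)) : Prop :=
  ∀ x₁ x₂ : X, 0 ≤ (φ x₁ - φ x₂) * (ψ x₁ - ψ x₂)


lemma myLog_exp (r : ℝ) : myLog (Real.exp r) = (r : EReal) := by
  simp [myLog, (Real.exp_pos r).not_ge, Real.log_exp]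

lemma myLog_mono {r s : ℝ} (h : r ≤ s) : myLog r ≤ myLog s := by
  by_cases hr : r ≤ 0
  · simp [myLog, hr]
  · have hs : ¬ s ≤ 0 := fun hs => hr (h.trans hs)
    push_neg at hr
    simp only [myLog, if_neg (not_le.mpr hr), if_neg hs]
    exact_mod_cast Real.log_le_log hr h

lemma myLog_one : myLog 1 = 0 := by simp [myLog]

lemma myLog_nonpos_zero {r : ℝ} (h : r ≤ 0) : myLog r = ⊥ := by simp [myLog, h]

section
variable {X : Type*} [TopologicalSpace X] [CompactSpace X] [T2Space X]

def MonoVia (φ A : C(X,ℝ)) : Prop := ∀ x y : X, φ x ≤ φ y → A x ≤ A y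

lemma comonotone_of_monoVia {φ A B : C(X,ℝ)} (hA : MonoVia φ A) (hB : MonoVia φ B) :
    Comonotone A B := by
  intro x y
  rcases le_total (φ x) (φ y) with h | h
  · have := hA x y h; have := hB x y h; nlinarith
  · have := hA y x h; have := hB y x h; nlinarith
end
section forward
variable {X : Type*} [TopologicalSpace X] [CompactSpace X] [T2Space X]
variable {I : C(X,ℝ) → ℝ}

lemma I_zero (h1 : I 1 = 1)
    (h3 : ∀ (l : ℝ) (φ : C(X, ℝ)), I (ContinuousMap.const X l + φ) = l + I φ) :
    I 0 = 0 := by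
  have h := h3 1 0
  have e : (ContinuousMap.const X 1 + 0 : C(X,ℝ)) = 1 := by ext x; simp
  rw [e, h1] at h
  linarith

lemma I_const (h1 : I 1 = 1)
    (h3 : ∀ (l : ℝ) (φ : C(X, ℝ)), I (ContinuousMap.const X l + φ) = l + I φ) (r : ℝ) :
    I (ContinuousMap.const X r) = r := by
  have h := h3 r 0
  rw [add_zero, I_zero h1 h3, add_zero] at h
  exact h

lemma I_mono_co (h2 : ∀ ψ φ : C(X, ℝ), Comonotone φ ψ → I (ψ ⊔ φ) = max (I ψ) (I φ))
    {A B : C(X,ℝ)} (hco : Comonotone A B) (hle : A ≤ B) : I A ≤ I B := by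
  have h := h2 B A hco
  rw [sup_eq_left.mpr hle] at h
  have h' := le_max_right (I B) (I A)
  rw [← h] at h'
  exact h'

lemma I_le_of_le_const (h1 : I 1 = 1)
    (h2 : ∀ ψ φ : C(X, ℝ), Comonotone φ ψ → I (ψ ⊔ φ) = max (I ψ) (I φ))
    (h3 : ∀ (l : ℝ) (φ : C(X, ℝ)), I (ContinuousMap.const X l + φ) = l + I φ)
    {A : C(X,ℝ)} {r : ℝ} (h : ∀ x, A x ≤ r) : I A ≤ r := by
  have hco : Comonotone A (ContinuousMap.const X r) := by
    intro x y; simp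
  have hh := h2 (ContinuousMap.const X r) A hco
  have e : ContinuousMap.const X r ⊔ A = ContinuousMap.const X r :=
    sup_eq_left.mpr (by intro x; simpa using h x)
  rw [e, I_const h1 h3] at hh
  have h' := le_max_right r (I A)
  rw [← hh] at h'
  exact h'

lemma monoVia_sup' {φ : C(X,ℝ)} {ι : Type*} (s : Finset ι) (hs : s.Nonempty)
    (f : ι → C(X,ℝ)) (h : ∀ i ∈ s, MonoVia φ (f i)) : MonoVia φ (s.sup' hs f) := by
  intro x y hxy
  simp only [ContinuousMap.sup'_apply]
  exact Finset.sup'_mono_fun fun i hi => h i hi x y hxy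

lemma I_sup' (h2 : ∀ ψ φ : C(X, ℝ), Comonotone φ ψ → I (ψ ⊔ φ) = max (I ψ) (I φ))
    (φ : C(X,ℝ)) {ι : Type*} (s : Finset ι) (hs : s.Nonempty) (f : ι → C(X,ℝ))
    (hm : ∀ i ∈ s, MonoVia φ (f i)) :
    I (s.sup' hs f) = s.sup' hs fun i => I (f i) := by
  revert hm
  induction hs using Finset.Nonempty.cons_induction with
  | singleton i => intro hm; simp
  | cons a s ha hs ih =>
    intro hm
    have hma : MonoVia φ (f a) := hm a (Finset.mem_cons_self a s)
    have hms : ∀ i ∈ s, MonoVia φ (f i) := fun i hi => hm i (Finset.mem_cons_of_mem hi)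
    rw [Finset.sup'_cons (H := hs), Finset.sup'_cons (H := hs)]
    rw [h2 (f a) (s.sup' hs f) (comonotone_of_monoVia (monoVia_sup' s hs f hms) hma)]
    rw [ih hms]

end forward
section forward2
variable {X : Type*} [TopologicalSpace X] [CompactSpace X] [T2Space X]
variable {I : C(X,ℝ) → ℝ}

noncomputable def gfun (φ : C(X,ℝ)) (t l : ℝ) : C(X,ℝ) :=
  ContinuousMap.const X t ⊓ (ContinuousMap.const X t + l⁻¹ • (φ - ContinuousMap.const X t))

lemma gfun_apply (φ : C(X,ℝ)) (t l : ℝ) (x : X) :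
    gfun φ t l x = min t (t + l⁻¹ * (φ x - t)) := rfl

lemma monoVia_gfun (φ : C(X,ℝ)) (t : ℝ) {l : ℝ} (hl : 0 < l) : MonoVia φ (gfun φ t l) := by
  intro x y h
  rw [gfun_apply, gfun_apply]
  exact min_le_min le_rfl
    (add_le_add_right (mul_le_mul_of_nonneg_left (sub_le_sub_right h t) (inv_nonneg.mpr hl.le)) t)

lemma gfun_le_gfun (φ : C(X,ℝ)) (t : ℝ) {l m : ℝ} (hl : 0 < l) (hlm : l ≤ m) :
    gfun φ t l ≤ gfun φ t m := by
  have hm : 0 < m := hl.trans_le hlm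
  rw [ContinuousMap.le_def]
  intro x
  rw [gfun_apply, gfun_apply]
  rcases le_total t (φ x) with h | h
  · have e1 : min t (t + l⁻¹ * (φ x - t)) = t :=
      min_eq_left (le_add_of_nonneg_right (mul_nonneg (inv_nonneg.mpr hl.le) (by linarith)))
    have e2 : min t (t + m⁻¹ * (φ x - t)) = t :=
      min_eq_left (le_add_of_nonneg_right (mul_nonneg (inv_nonneg.mpr hm.le) (by linarith)))
    rw [e1, e2]
  · refine min_le_min le_rfl ?_
    have hinv : m⁻¹ ≤ l⁻¹ := inv_anti₀ hl hlm
    nlinarith [hinv, inv_nonneg.mpr hm.le]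

lemma gfun_le_self (φ : C(X,ℝ)) (t : ℝ) {l : ℝ} (hl : 0 < l) (hl1 : l ≤ 1) :
    gfun φ t l ≤ φ := by
  rw [ContinuousMap.le_def]
  intro x
  rw [gfun_apply]
  rcases le_total t (φ x) with h | h
  · exact (min_le_left _ _).trans h
  · refine (min_le_right _ _).trans ?_
    have h1 : (1:ℝ) ≤ l⁻¹ := (one_le_inv₀ hl).mpr hl1
    nlinarith [h1]

end forward2
section forward3
variable {X : Type*} [TopologicalSpace X] [CompactSpace X] [T2Space X]
variable {I : C(X,ℝ) → ℝ}

lemma exists_level [Nonempty X]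
    (h2 : ∀ ψ φ : C(X, ℝ), Comonotone φ ψ → I (ψ ⊔ φ) = max (I ψ) (I φ))
    (h3 : ∀ (l : ℝ) (φ : C(X, ℝ)), I (ContinuousMap.const X l + φ) = l + I φ)
    (φ : C(X,ℝ)) {ε : ℝ} (hε : 0 < ε) :
    ∃ t : ℝ, ∀ θ : C(X,ℝ), θ ≤ 0 →
      (∃ U : Set X, IsOpen U ∧ {x | t ≤ φ x} ⊆ U ∧ ∀ x ∈ U, θ x = 0) →
      I φ - ε - t ≤ I θ := by
  obtain ⟨xa, -, ha⟩ := isCompact_univ.exists_isMinOn Set.univ_nonempty φ.continuous.continuousOn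
  obtain ⟨xb, -, hb⟩ := isCompact_univ.exists_isMaxOn Set.univ_nonempty φ.continuous.continuousOn
  rw [isMinOn_iff] at ha
  rw [isMaxOn_iff] at hb
  set a := φ xa with ha_def
  set b := φ xb with hb_def
  set n := Nat.ceil ((b - a)/ε) with hn
  set T : ℕ → ℝ := fun i => a + i * ε with hT
  set s : Finset ℕ := Finset.range (n+1) with hs_def
  have hs : s.Nonempty := ⟨0, Finset.mem_range.mpr (Nat.succ_pos n)⟩
  have hcover : ∀ x : X, ∃ i, i ∈ s ∧ T i ≤ φ x ∧ φ x ≤ T i + ε := by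
    intro x
    have hxa : a ≤ φ x := ha x (Set.mem_univ x)
    have hxb : φ x ≤ b := hb x (Set.mem_univ x)
    set u := (φ x - a)/ε with hu
    have hu0 : 0 ≤ u := div_nonneg (by linarith) hε.le
    have hfl : (⌊u⌋₊ : ℝ) ≤ u := Nat.floor_le hu0
    have hfl2 : u < ⌊u⌋₊ + 1 := Nat.lt_floor_add_one u
    have hue : u * ε = φ x - a := div_mul_cancel₀ _ hε.ne'
    refine ⟨⌊u⌋₊, ?_, ?_, ?_⟩
    · rw [hs_def, Finset.mem_range, Nat.lt_succ_iff]
      have h1' : u ≤ (b - a)/ε := by rw [hu]; gcongr <;> linarith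
      have h2' : ((b - a)/ε : ℝ) ≤ (n : ℝ) := Nat.le_ceil _
      have : (⌊u⌋₊ : ℝ) ≤ (n : ℝ) := by linarith
      exact_mod_cast this
    · show T ⌊u⌋₊ ≤ φ x
      have := mul_le_mul_of_nonneg_right hfl hε.le
      rw [hue] at this
      simp only [hT]
      linarith
    · show φ x ≤ T ⌊u⌋₊ + ε
      have := mul_le_mul_of_nonneg_right hfl2.le hε.le
      rw [hue] at this
      simp only [hT]
      nlinarith
  have key : ∃ i, i ∈ s ∧ ∀ l : ℝ, 0 < l → l ≤ 1 → I φ - ε ≤ I (gfun φ (T i) l) := by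
    by_contra hcon
    push_neg at hcon
    choose L hL0 hL1 hLlt using hcon
    set Λ : ℕ → ℝ := fun i => if h : i ∈ s then L i h else 1 with hΛ
    have hΛpos : ∀ i, 0 < Λ i := by
      intro i
      rw [hΛ]; dsimp only; split
      · exact hL0 i ‹_›
      · exact one_pos
    set lam := s.inf' hs Λ with hlam_def
    obtain ⟨i₀, hi₀, hEq⟩ := Finset.exists_mem_eq_inf' hs Λ
    have hlam0 : 0 < lam := by rw [hlam_def, hEq]; exact hΛpos i₀
    have hlt : ∀ i ∈ s, I (gfun φ (T i) lam) < I φ - ε := by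
      intro i hi
      have hle : lam ≤ Λ i := Finset.inf'_le Λ hi
      have hle2 : gfun φ (T i) lam ≤ gfun φ (T i) (Λ i) := gfun_le_gfun φ (T i) hlam0 hle
      have hco : Comonotone (gfun φ (T i) lam) (gfun φ (T i) (Λ i)) :=
        comonotone_of_monoVia (monoVia_gfun φ (T i) hlam0) (monoVia_gfun φ (T i) (hΛpos i))
      refine lt_of_le_of_lt (I_mono_co h2 hco hle2) ?_
      have hΛi : Λ i = L i hi := by rw [hΛ]; dsimp only; rw [dif_pos hi]
      rw [hΛi]
      exact hLlt i hi
    set G := s.sup' hs (fun i => gfun φ (T i) lam) with hG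
    have hmG : ∀ i ∈ s, MonoVia φ (gfun φ (T i) lam) := fun i _ => monoVia_gfun φ (T i) hlam0
    have hIG : I G = s.sup' hs (fun i => I (gfun φ (T i) lam)) := I_sup' h2 φ s hs _ hmG
    have hφle : φ ≤ ContinuousMap.const X ε + G := by
      rw [ContinuousMap.le_def]; intro x
      obtain ⟨i, hi, hti, hphi⟩ := hcover x
      have hgx : T i ≤ G x := by
        have hgv : gfun φ (T i) lam x = T i := by
          rw [gfun_apply]
          exact min_eq_left (le_add_of_nonneg_right (mul_nonneg (inv_nonneg.mpr hlam0.le)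
            (by linarith)))
        calc T i = gfun φ (T i) lam x := hgv.symm
          _ ≤ G x := by
            rw [hG, ContinuousMap.sup'_apply]
            exact Finset.le_sup' (fun j => gfun φ (T j) lam x) hi
      simp only [ContinuousMap.add_apply, ContinuousMap.const_apply]
      linarith
    have hcoφ : Comonotone φ (ContinuousMap.const X ε + G) := by
      apply comonotone_of_monoVia (fun x y h => h)
      intro x y h
      simp only [ContinuousMap.add_apply, ContinuousMap.const_apply]
      exact add_le_add_right (monoVia_sup' s hs _ hmG x y h) ε
    have hIφ : I φ ≤ ε + I G := by
      have hmono := I_mono_co h2 hcoφ hφle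
      rwa [h3 ε G] at hmono
    have hfin : s.sup' hs (fun i => I (gfun φ (T i) lam)) < I φ - ε :=
      (Finset.sup'_lt_iff hs).mpr hlt
    rw [hIG] at hIφ
    linarith
  obtain ⟨i, hi, hkey⟩ := key
  refine ⟨T i, ?_⟩
  rintro θ hθ0 ⟨U, hUopen, hUsub, hUvan⟩
  have hθx : ∀ x, θ x ≤ 0 := fun x => by simpa using (ContinuousMap.le_def.mp hθ0) x
  obtain ⟨xr, -, hxr⟩ := isCompact_univ.exists_isMaxOn Set.univ_nonempty
    (θ.continuous.neg.continuousOn)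
  rw [isMaxOn_iff] at hxr
  set R := -θ xr + 1 with hR
  have hR1 : 1 ≤ R := by have := hθx xr; rw [hR]; linarith
  have hR0 : 0 < R := lt_of_lt_of_le one_pos hR1
  have hθR : ∀ x, -R + 1 ≤ θ x := by
    intro x
    have := hxr x (Set.mem_univ x)
    simp only [Pi.neg_apply] at this
    rw [hR]
    linarith
  obtain ⟨δ, hδ0, hδ⟩ : ∃ δ, 0 < δ ∧ ∀ x, x ∉ U → φ x ≤ T i - δ := by
    rcases Set.eq_empty_or_nonempty Uᶜ with hK | hK
    · refine ⟨1, one_pos, fun x hx => ?_⟩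
      rw [← Set.mem_compl_iff, hK] at hx
      exact absurd hx (Set.notMem_empty x)
    · have hKc : IsCompact (Uᶜ) := hUopen.isClosed_compl.isCompact
      obtain ⟨x₀, hx₀K, hx₀⟩ := hKc.exists_isMaxOn hK φ.continuous.continuousOn
      rw [isMaxOn_iff] at hx₀
      have hlt0 : φ x₀ < T i := by
        by_contra hge
        push_neg at hge
        exact hx₀K (hUsub hge)
      exact ⟨T i - φ x₀, by linarith, fun x hx => by have := hx₀ x hx; linarith⟩
  set lam := min 1 (δ / R) with hlamd
  have hlam0 : 0 < lam := lt_min one_pos (div_pos hδ0 hR0)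
  have hlam1 : lam ≤ 1 := min_le_left _ _
  have hlamR : lam * R ≤ δ := by
    have hmr := min_le_right 1 (δ / R)
    calc lam * R ≤ (δ/R) * R := mul_le_mul_of_nonneg_right hmr hR0.le
      _ = δ := div_mul_cancel₀ δ hR0.ne'
  set ramp : C(X,ℝ) := (lam⁻¹ • (φ - ContinuousMap.const X (T i))) ⊓ 0 with hrampd
  have hramp_apply : ∀ x, ramp x = min (lam⁻¹ * (φ x - T i)) 0 := fun x => rfl
  set A := ramp ⊔ ContinuousMap.const X (-R) with hAd
  have hA_apply : ∀ x, A x = max (min (lam⁻¹ * (φ x - T i)) 0) (-R) := fun x => rfl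
  have hramp_eq : ramp = ContinuousMap.const X (-(T i)) + gfun φ (T i) lam := by
    ext x
    rw [hramp_apply, ContinuousMap.add_apply, ContinuousMap.const_apply, gfun_apply]
    rcases le_total (T i) (φ x) with h | h
    · rw [min_eq_right (mul_nonneg (inv_nonneg.mpr hlam0.le) (by linarith))]
      rw [min_eq_left (le_add_of_nonneg_right (mul_nonneg (inv_nonneg.mpr hlam0.le)
        (by linarith)))]
      ring
    · have hnp : lam⁻¹ * (φ x - T i) ≤ 0 :=
        mul_nonpos_iff.mpr (Or.inl ⟨(inv_nonneg.mpr hlam0.le), by linarith⟩)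
      rw [min_eq_left hnp, min_eq_right (by linarith : T i + lam⁻¹ * (φ x - T i) ≤ T i)]
      ring
  have hIramp : I ramp = -(T i) + I (gfun φ (T i) lam) := by rw [hramp_eq, h3]
  have hmramp : MonoVia φ ramp := by
    intro x y h
    rw [hramp_apply, hramp_apply]
    exact min_le_min (mul_le_mul_of_nonneg_left (by linarith) (inv_nonneg.mpr hlam0.le)) le_rfl
  have hmA : MonoVia φ A := by
    intro x y h
    rw [hA_apply, hA_apply]
    exact max_le_max
      (min_le_min (mul_le_mul_of_nonneg_left (by linarith) (inv_nonneg.mpr hlam0.le)) le_rfl) le_rfl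
  have hIrampA : I ramp ≤ I A :=
    I_mono_co h2 (comonotone_of_monoVia hmramp hmA) le_sup_left
  have hAoff : ∀ x, x ∉ U → A x = -R := by
    intro x hx
    rw [hA_apply]
    have h1' : φ x - T i ≤ -(lam * R) := by have := hδ x hx; linarith
    have h2' : lam⁻¹ * (φ x - T i) ≤ lam⁻¹ * (-(lam * R)) :=
      mul_le_mul_of_nonneg_left h1' (inv_nonneg.mpr hlam0.le)
    have h3' : lam⁻¹ * (-(lam * R)) = -R := by rw [mul_neg, inv_mul_cancel_left₀ hlam0.ne']
    have hle : min (lam⁻¹ * (φ x - T i)) 0 ≤ -R := (min_le_left _ _).trans (by linarith)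
    exact max_eq_right hle
  have hAθ : A ≤ θ := by
    rw [ContinuousMap.le_def]
    intro x
    by_cases hx : x ∈ U
    · rw [hUvan x hx, hA_apply]
      exact max_le (min_le_right _ _) (by linarith)
    · rw [hAoff x hx]
      linarith [hθR x]
  have hcoAθ : Comonotone A θ := by
    have hk : ∀ x y : X, θ x < θ y → A x ≤ A y := by
      intro x y hxy
      have hxU : x ∉ U := by
        intro hxU
        rw [hUvan x hxU] at hxy
        exact absurd hxy (not_lt.mpr (hθx y))
      rw [hAoff x hxU, hA_apply]
      exact le_max_right _ _
    intro x y
    rcases lt_trichotomy (θ x) (θ y) with h | h | h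
    · have := hk x y h; nlinarith
    · rw [h]; simp
    · have := hk y x h; nlinarith
  have hIAθ : I A ≤ I θ := I_mono_co h2 hcoAθ hAθ
  have hfinal := hkey lam hlam0 hlam1
  linarith [hIramp, hIrampA]

end forward3
/-- A functional `I : C(X) → ℝ` on a compactum `X` satisfies
(1) `I(1_X) = 1`; (2) `I(ψ ∨ φ) = max(I(ψ), I(φ))` for comonotone `φ, ψ`;
(3) `I(λ_X + φ) = λ + I(φ)`, if and only if there is a capacity `c` on `X`
with `I(φ) = ∫^{∨+} φ dc = max{ln c(φ_t) + t : t ∈ ℝ}` for every `φ ∈ C(X)`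
(computed in `ℝ ∪ {-∞}`, `φ_t = {x : φ(x) ≥ t}`). -/
theorem stmt16 {X : Type*} [TopologicalSpace X] [CompactSpace X] [T2Space X]
    (I : C(X, ℝ) → ℝ) :
    (I 1 = 1 ∧
     (∀ ψ φ : C(X, ℝ), Comonotone φ ψ → I (ψ ⊔ φ) = max (I ψ) (I φ)) ∧
     (∀ (l : ℝ) (φ : C(X, ℝ)), I (ContinuousMap.const X l + φ) = l + I φ)) ↔
    (∃ c : Set X → ℝ, IsCapacity c ∧
      ∀ φ : C(X, ℝ),
        ((I φ : ℝ) : EReal) = ⨆ t : ℝ, (myLog (c {x | t ≤ φ x}) + (t : EReal))) := by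
  constructor
  · rintro ⟨h1, h2, h3⟩
    rcases isEmpty_or_nonempty X with hX | hX
    · exfalso
      have h := h3 1 0
      have e : (ContinuousMap.const X 1 + 0 : C(X,ℝ)) = 0 := by ext x; exact isEmptyElim x
      rw [e] at h
      linarith
    set N : Set X → Set C(X,ℝ) := fun F =>
      {θ | θ ≤ 0 ∧ ∃ U : Set X, IsOpen U ∧ F ⊆ U ∧ ∀ x ∈ U, θ x = 0} with hN
    set c : Set X → ℝ := fun F => sInf ((fun θ => Real.exp (I θ)) '' N F) with hc
    have hN0 : ∀ F, (0:C(X,ℝ)) ∈ N F := fun F =>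
      ⟨le_rfl, Set.univ, isOpen_univ, Set.subset_univ F, fun x _ => rfl⟩
    have hNne : ∀ F, ((fun θ => Real.exp (I θ)) '' N F).Nonempty :=
      fun F => ⟨Real.exp (I 0), 0, hN0 F, rfl⟩
    have hbdd : ∀ F, BddBelow ((fun θ => Real.exp (I θ)) '' N F) := by
      intro F
      refine ⟨0, ?_⟩
      rintro r ⟨θ, -, rfl⟩
      exact (Real.exp_pos _).le
    have hc0 : ∀ F, 0 ≤ c F := fun F =>
      le_csInf (hNne F) (by rintro r ⟨θ, -, rfl⟩; exact (Real.exp_pos _).le)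
    have hcle : ∀ F θ, θ ∈ N F → c F ≤ Real.exp (I θ) :=
      fun F θ hθ => csInf_le (hbdd F) ⟨θ, hθ, rfl⟩
    have hc1 : ∀ F, c F ≤ 1 := by
      intro F
      have h' := hcle F 0 (hN0 F)
      rwa [I_zero h1 h3, Real.exp_zero] at h'
    have hcmono : ∀ F G : Set X, F ⊆ G → c F ≤ c G := by
      intro F G hFG
      refine csInf_le_csInf (hbdd F) (hNne G) (Set.image_mono ?_)
      rintro θ ⟨hθ0, U, hU, hGU, hvan⟩
      exact ⟨hθ0, U, hU, hFG.trans hGU, hvan⟩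
    have hcuniv : c Set.univ = 1 := by
      have hNuniv : N Set.univ = {0} := by
        ext θ
        constructor
        · rintro ⟨hθ0, U, hU, hsub, hvan⟩
          have hUuniv : U = Set.univ := Set.univ_subset_iff.mp hsub
          have : θ = 0 := by
            ext x
            simpa using hvan x (by rw [hUuniv]; trivial)
          simpa using this
        · rintro rfl
          exact hN0 _
      rw [hc]
      simp only [hNuniv, Set.image_singleton, csInf_singleton]
      rw [I_zero h1 h3, Real.exp_zero]
    have hcempty : c ∅ = 0 := by
      refine le_antisymm ?_ (hc0 ∅)
      have hmem : ∀ m : ℕ, c ∅ ≤ Real.exp (-(m:ℝ)) := by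
        intro m
        have hmemN : (ContinuousMap.const X (-(m:ℝ))) ∈ N ∅ := by
          refine ⟨?_, ∅, isOpen_empty, subset_rfl, fun x hx => absurd hx (Set.notMem_empty x)⟩
          rw [ContinuousMap.le_def]
          intro x
          simp
        have h' := hcle ∅ _ hmemN
        rwa [I_const h1 h3] at h'
      have htend : Filter.Tendsto (fun m : ℕ => Real.exp (-(m:ℝ))) Filter.atTop (nhds 0) :=
        Real.tendsto_exp_atBot.comp (Filter.tendsto_neg_atTop_atBot.comp tendsto_natCast_atTop_atTop)
      exact ge_of_tendsto htend (Filter.Eventually.of_forall hmem)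
    refine ⟨c, ⟨hcuniv, hcempty, fun F _ => ⟨hc0 F, hc1 F⟩,
      fun F G _ _ hFG => hcmono F G hFG, ?_⟩, ?_⟩
    · intro F aa hF hlt
      obtain ⟨r, ⟨θ, ⟨hθ0, U, hU, hsub, hvan⟩, rfl⟩, hra⟩ := exists_lt_of_csInf_lt (hNne F) hlt
      refine ⟨U, hU, hsub, fun B _ hBU => ?_⟩
      exact lt_of_le_of_lt (hcle B θ ⟨hθ0, U, hU, hBU, hvan⟩) hra
    · intro φ
      apply le_antisymm
      · -- hard direction: I φ ≤ sup
        by_contra hcon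
        push_neg at hcon
        obtain ⟨q, hq1, hq2⟩ := EReal.exists_between_coe_real hcon
        have hqlt : q < I φ := EReal.coe_lt_coe_iff.mp hq2
        set ε := I φ - q with hε_def
        have hε : 0 < ε := by rw [hε_def]; linarith
        obtain ⟨t, ht⟩ := exists_level h2 h3 φ hε
        have hclow : Real.exp (I φ - ε - t) ≤ c {x | t ≤ φ x} := by
          apply le_csInf (hNne _)
          rintro r ⟨θ, hθ, rfl⟩
          exact Real.exp_le_exp.mpr (ht θ hθ.1 hθ.2)
        have hml := myLog_mono hclow
        rw [myLog_exp] at hml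
        have heq : I φ - ε - t = q - t := by rw [hε_def]; ring
        rw [heq] at hml
        have hterm2 : (q:EReal) ≤ myLog (c {x | t ≤ φ x}) + (t:EReal) := by
          have h' := add_le_add_left hml (t:EReal)
          refine le_trans ?_ h'
          rw [← EReal.coe_add]
          norm_num
        exact absurd (hterm2.trans
          (le_iSup (fun t : ℝ => myLog (c {x | t ≤ φ x}) + (t:EReal)) t)) (not_le.mpr hq1)
      · apply iSup_le
        intro t
        have hδb : ∀ δ : ℝ, 0 < δ → c {x | t ≤ φ x} ≤ Real.exp (I φ - t + δ) := by
          intro δ hδ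
          set θδ : C(X,ℝ) := (ContinuousMap.const X (δ - t) + φ) ⊓ 0 with hθδ
          have happ : ∀ x, θδ x = min (δ - t + φ x) 0 := fun x => rfl
          have hmem : θδ ∈ N {x | t ≤ φ x} := by
            refine ⟨?_, {x | t - δ < φ x}, ?_, ?_, ?_⟩
            · rw [ContinuousMap.le_def]
              intro x
              rw [happ]
              simpa using min_le_right (δ - t + φ x) 0
            · exact isOpen_lt continuous_const φ.continuous
            · intro x hx
              simp only [Set.mem_setOf_eq] at hx ⊢
              linarith
            · intro x hx
              simp only [Set.mem_setOf_eq] at hx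
              rw [happ]
              exact min_eq_right (by linarith)
          have hIθδ : I θδ ≤ δ - t + I φ := by
            have hco : Comonotone θδ (ContinuousMap.const X (δ - t) + φ) := by
              refine comonotone_of_monoVia (φ := φ) ?_ ?_
              · intro x y h
                rw [happ, happ]
                exact min_le_min (by linarith) le_rfl
              · intro x y h
                simp only [ContinuousMap.add_apply, ContinuousMap.const_apply]
                linarith
            have hle : θδ ≤ ContinuousMap.const X (δ - t) + φ := inf_le_left
            have h' := I_mono_co h2 hco hle
            rwa [h3] at h'
          calc c {x | t ≤ φ x} ≤ Real.exp (I θδ) := hcle _ _ hmem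
            _ ≤ Real.exp (δ - t + I φ) := Real.exp_le_exp.mpr hIθδ
            _ = Real.exp (I φ - t + δ) := by ring_nf
        have hcle' : c {x | t ≤ φ x} ≤ Real.exp (I φ - t) := by
          have htend : Filter.Tendsto (fun δ : ℝ => Real.exp (I φ - t + δ))
              (nhdsWithin 0 (Set.Ioi 0)) (nhds (Real.exp (I φ - t))) := by
            have h' : Filter.Tendsto (fun δ : ℝ => Real.exp (I φ - t + δ)) (nhds 0)
                (nhds (Real.exp (I φ - t + 0))) :=
              (Real.continuous_exp.comp (continuous_const.add continuous_id)).tendsto 0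
            simpa using h'.mono_left nhdsWithin_le_nhds
          exact ge_of_tendsto htend
            (eventually_mem_nhdsWithin.mono fun δ hδ => hδb δ (Set.mem_Ioi.mp hδ))
        calc myLog (c {x | t ≤ φ x}) + (t:EReal)
            ≤ ((I φ - t : ℝ):EReal) + (t:EReal) :=
              add_le_add_left ((myLog_mono hcle').trans_eq (myLog_exp _)) _
          _ = ((I φ : ℝ):EReal) := by
              rw [← EReal.coe_add]
              norm_num
  · rintro ⟨c, hcap, hrep⟩
    obtain ⟨hcuniv, hcempty, hcbounds, hcmono, hcusc⟩ := hcap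
    rcases isEmpty_or_nonempty X with hX | hX
    · exfalso
      rw [Set.univ_eq_empty_iff.mpr hX, hcempty] at hcuniv
      exact zero_ne_one hcuniv
    refine ⟨?_, ?_, ?_⟩
    · -- I 1 = 1
      have h := hrep 1
      have hsup : (⨆ t : ℝ, (myLog (c {x | t ≤ (1:C(X,ℝ)) x}) + (t : EReal))) = (1:EReal) := by
        apply le_antisymm
        · apply iSup_le
          intro t
          by_cases ht : t ≤ 1
          · have hst : {x : X | t ≤ (1:C(X,ℝ)) x} = Set.univ := by
              ext x; simp [ht]
            rw [hst, hcuniv, myLog_one, zero_add]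
            exact_mod_cast ht
          · have hst : {x : X | t ≤ (1:C(X,ℝ)) x} = ∅ := by
              ext x; simp [ht]
            rw [hst, hcempty, myLog_nonpos_zero le_rfl, EReal.bot_add]
            exact bot_le
        · have h1 : (myLog (c {x : X | (1:ℝ) ≤ (1:C(X,ℝ)) x}) + ((1:ℝ) : EReal))
              ≤ ⨆ t : ℝ, (myLog (c {x | t ≤ (1:C(X,ℝ)) x}) + (t : EReal)) :=
            le_iSup (fun t : ℝ => (myLog (c {x | t ≤ (1:C(X,ℝ)) x}) + (t : EReal))) 1
          refine le_trans ?_ h1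
          have hst : {x : X | (1:ℝ) ≤ (1:C(X,ℝ)) x} = Set.univ := by ext x; simp
          rw [hst, hcuniv, myLog_one, zero_add]
          exact_mod_cast le_rfl
      rw [hsup] at h
      exact_mod_cast h
    · intro ψ φ hco
      have hterm : ∀ t : ℝ,
          myLog (c {x | t ≤ (ψ ⊔ φ) x}) + (t:EReal)
            = (myLog (c {x | t ≤ ψ x}) + (t:EReal)) ⊔ (myLog (c {x | t ≤ φ x}) + (t:EReal)) := by
        intro t
        have hclψ : IsClosed {x | t ≤ ψ x} := isClosed_le continuous_const ψ.continuous
        have hclφ : IsClosed {x | t ≤ φ x} := isClosed_le continuous_const φ.continuous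
        have hsetsup : {x | t ≤ (ψ ⊔ φ) x} = {x | t ≤ ψ x} ∪ {x | t ≤ φ x} := by
          ext x
          simp [le_sup_iff]
        have hsub : {x | t ≤ φ x} ⊆ {x | t ≤ ψ x} ∨ {x | t ≤ ψ x} ⊆ {x | t ≤ φ x} := by
          by_contra hcon
          push_neg at hcon
          obtain ⟨h1', h2'⟩ := hcon
          obtain ⟨x, hx1, hx2⟩ := Set.not_subset.mp h1'
          obtain ⟨y, hy1, hy2⟩ := Set.not_subset.mp h2'
          simp only [Set.mem_setOf_eq] at hx1 hx2 hy1 hy2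
          push_neg at hx2 hy2
          have := hco x y
          nlinarith
        rcases hsub with h' | h'
        · rw [hsetsup, Set.union_eq_self_of_subset_right h']
          exact (sup_eq_left.mpr (add_le_add_left (myLog_mono (hcmono _ _ hclφ hclψ h')) _)).symm
        · rw [hsetsup, Set.union_eq_self_of_subset_left h']
          exact (sup_eq_right.mpr (add_le_add_left (myLog_mono (hcmono _ _ hclψ hclφ h')) _)).symm
      have h := hrep (ψ ⊔ φ)
      rw [iSup_congr hterm, iSup_sup_eq, ← hrep ψ, ← hrep φ] at h
      have hmax : ((max (I ψ) (I φ) : ℝ) : EReal) = ((I ψ : ℝ) : EReal) ⊔ ((I φ : ℝ) : EReal) :=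
        Monotone.map_max (fun _ _ hab => EReal.coe_le_coe_iff.mpr hab)
      rw [← hmax] at h
      exact_mod_cast h
    · intro l φ
      have hS := hrep φ
      have h := hrep (ContinuousMap.const X l + φ)
      have hterm : ∀ t : ℝ,
          myLog (c {x | t ≤ (ContinuousMap.const X l + φ) x}) + (t:EReal)
          = (myLog (c {x | t - l ≤ φ x}) + ((t - l : ℝ):EReal)) + (l:EReal) := by
        intro t
        have hset : {x | t ≤ (ContinuousMap.const X l + φ) x} = {x | t - l ≤ φ x} := by
          ext x
          simp only [ContinuousMap.add_apply, ContinuousMap.const_apply, Set.mem_setOf_eq]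
          constructor <;> intro h' <;> linarith
        rw [hset, add_assoc]
        congr 1
        rw [← EReal.coe_add]
        norm_num
      rw [iSup_congr hterm] at h
      have hsup : (⨆ t : ℝ, ((myLog (c {x | t - l ≤ φ x}) + ((t - l : ℝ):EReal)) + (l:EReal)))
          = ((l + I φ : ℝ) : EReal) := by
        apply le_antisymm
        · apply iSup_le
          intro t
          have h1t : myLog (c {x | t - l ≤ φ x}) + ((t - l:ℝ):EReal) ≤ ((I φ : ℝ):EReal) := by
            rw [hS]
            exact le_iSup (fun s : ℝ => myLog (c {x | s ≤ φ x}) + (s:EReal)) (t - l)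
          calc (myLog (c {x | t - l ≤ φ x}) + ((t - l : ℝ):EReal)) + (l:EReal)
              ≤ ((I φ:ℝ):EReal) + (l:EReal) := add_le_add_left h1t _
            _ = ((l + I φ : ℝ):EReal) := by
                rw [← EReal.coe_add]
                norm_num
                rw [add_comm]
        · by_contra hcon
          push_neg at hcon
          obtain ⟨q, hq1, hq2⟩ := EReal.exists_between_coe_real hcon
          have hql : q - l < I φ := by
            have := EReal.coe_lt_coe_iff.mp hq2
            linarith
          have hlt2 : ((q - l:ℝ):EReal) < ⨆ s:ℝ, (myLog (c {x | s ≤ φ x}) + (s:EReal)) := by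
            rw [← hS]
            exact_mod_cast hql
          obtain ⟨s, hs2⟩ := lt_iSup_iff.mp hlt2
          have hfin : (q:EReal)
              < (myLog (c {x | (s + l) - l ≤ φ x}) + (((s+l) - l:ℝ):EReal)) + (l:EReal) := by
            have h' := EReal.add_lt_add_right_coe hs2 l
            have heqq : ((q - l:ℝ):EReal) + (l:EReal) = (q:EReal) := by
              rw [← EReal.coe_add]; norm_num
            rw [heqq] at h'
            have heq2 : (s + l) - l = s := by ring
            rw [heq2]
            exact h'
          have hle := le_iSup
            (fun t : ℝ => (myLog (c {x | t - l ≤ φ x}) + ((t - l:ℝ):EReal)) + (l:EReal)) (s + l)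
          exact absurd (hfin.trans_le hle) (not_lt.mpr hq1.le)
      rw [hsup] at h
      exact_mod_cast h
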